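/- Let n ≥ 1, let 1 ≤ i < j < k ≤ n be top positions and 1 ≤ l ≤ n a bottom position. Suppose μ and μ' are Brauer diagrams of size n that agree on every edge not incident to any of T_i, T_j, T_k, B_l, and that μ contains the cup {T_i,T_k} and the arc {T_j,B_l}, while μ' contains the arc {T_i,B_l} and the cup {T_j,T_k}. Then χ(μ) ≡ χ(μ') + 1 (mod 2), i.e. (−1)^{χ(μ)} = −(−1)^{χ(μ')}. -/

import Mathlib

open Finset

/-- Vertices of a Brauer diagram of size `n`: `Sum.inl i` is the top point `T i`
and `Sum.inr m` is the bottom point `B m` (positions indexed left to right by `Fin n`). -/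
abbrev BVertex (n : ℕ) := Fin n ⊕ Fin n

/-- A Brauer diagram of size `n` is a perfect matching of the `2n` vertices,
encoded as a fixed-point-free involution. -/
def BrauerDiagram (n : ℕ) :=
  {f : Equiv.Perm (BVertex n) // (∀ x, f (f x) = x) ∧ (∀ x, f x ≠ x)}

instance (n : ℕ) : Fintype (BrauerDiagram n) := Subtype.fintype _

/-- An edge of a Brauer diagram: a cup joins two top points, a cap joins two bottom
points, and an arc joins a top point and a bottom point. In `cup i j` and `cap i j`
we maintain `i < j`, and in `arc i m`, `i` is the top position and `m` the bottom one. -/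
inductive BEdge (n : ℕ)
  | cup : Fin n → Fin n → BEdge n
  | cap : Fin n → Fin n → BEdge n
  | arc : Fin n → Fin n → BEdge n
deriving DecidableEq

/-- The canonical edge with endpoints `x` and `y`. -/
def edgeOf {n : ℕ} : BVertex n → BVertex n → BEdge n
  | .inl i, .inl j => .cup (min i j) (max i j)
  | .inr i, .inr j => .cap (min i j) (max i j)
  | .inl i, .inr m => .arc i m
  | .inr m, .inl i => .arc i m

/-- Whether two edges of a Brauer diagram cross. -/
def crosses {n : ℕ} : BEdge n → BEdge n → Bool
  | .cup i j, .cup k l => decide ((i < k ∧ k < j ∧ j < l) ∨ (k < i ∧ i < l ∧ l < j))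
  | .cap i j, .cap k l => decide ((i < k ∧ k < j ∧ j < l) ∨ (k < i ∧ i < l ∧ l < j))
  | .cup _ _, .cap _ _ => false
  | .cap _ _, .cup _ _ => false
  | .cup i j, .arc k _ => decide (i < k ∧ k < j)
  | .arc k _, .cup i j => decide (i < k ∧ k < j)
  | .cap i j, .arc _ m => decide (i < m ∧ m < j)
  | .arc _ m, .cap i j => decide (i < m ∧ m < j)
  | .arc i m, .arc j m' => decide ((i < j ∧ m' < m) ∨ (j < i ∧ m < m'))

/-- The set of edges of a Brauer diagram. -/
def edges {n : ℕ} (μ : BrauerDiagram n) : Finset (BEdge n) :=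
  Finset.univ.image fun x => edgeOf x (μ.1 x)

/-- The crossing number of a Brauer diagram: the number of unordered pairs of
its edges that cross. -/
def crossingNumber {n : ℕ} (μ : BrauerDiagram n) : ℕ :=
  ((edges μ).offDiag.filter fun p => crosses p.1 p.2 = true).card / 2

-- AUX

namespace CupArcSwapAux

variable {n : ℕ}

def N (s : Finset (BEdge n)) : ℕ :=
  ∑ a ∈ s, ∑ b ∈ s, if a ≠ b ∧ crosses a b = true then 1 else 0

lemma crosses_comm (a b : BEdge n) : crosses a b = crosses b a := by
  cases a <;> cases b <;> simp only [crosses, decide_eq_decide] <;> tauto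

lemma crossing_eq (s : Finset (BEdge n)) :
    ((s.offDiag.filter fun p => crosses p.1 p.2 = true).card) = N s := by
  have h : s.offDiag = (s ×ˢ s).filter fun p => p.1 ≠ p.2 := by
    ext p
    simp [Finset.mem_offDiag, Finset.mem_product, and_assoc]
  rw [Finset.card_filter, h, Finset.sum_filter, Finset.sum_product, N]
  refine Finset.sum_congr rfl fun a _ => Finset.sum_congr rfl fun b _ => ?_
  by_cases hab : a = b <;> simp [hab]

lemma N_insert {c : BEdge n} {s : Finset (BEdge n)} (hc : c ∉ s) :
    N (insert c s) = N s + 2 * ∑ b ∈ s, (if crosses c b = true then 1 else 0) := by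
  have hcc : (if c ≠ c ∧ crosses c c = true then (1:ℕ) else 0) = 0 := by simp
  have h1 : ∀ b ∈ s, (if c ≠ b ∧ crosses c b = true then (1:ℕ) else 0)
      = if crosses c b = true then 1 else 0 := by
    intro b hb
    have : c ≠ b := fun h => hc (h ▸ hb)
    simp [this]
  have h2 : ∀ a ∈ s, ∑ b ∈ insert c s,
      (if a ≠ b ∧ crosses a b = true then (1:ℕ) else 0)
      = (if crosses c a = true then 1 else 0)
        + ∑ b ∈ s, (if a ≠ b ∧ crosses a b = true then 1 else 0) := by
    intro a ha
    rw [Finset.sum_insert hc]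
    congr 1
    have hac : a ≠ c := fun h => hc (h ▸ ha)
    simp [hac, crosses_comm c a]
  unfold N
  rw [Finset.sum_insert hc, Finset.sum_insert hc, hcc,
    Finset.sum_congr rfl h1, Finset.sum_congr rfl h2, Finset.sum_add_distrib]
  ring

lemma even_N (s : Finset (BEdge n)) : Even (N s) := by
  induction s using Finset.induction_on with
  | empty => simp [N]
  | insert _ _ hc ih => rw [N_insert hc]; exact ih.add (even_two_mul _)

lemma key_parity {i j k l : Fin n} (hij : i < j) (hjk : j < k) (e : BEdge n)
    (he1 : ∀ a b, e = .cup a b → a < b ∧ a ≠ i ∧ a ≠ j ∧ a ≠ k ∧ b ≠ i ∧ b ≠ j ∧ b ≠ k)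
    (he2 : ∀ a m, e = .arc a m → a ≠ i ∧ a ≠ j ∧ a ≠ k ∧ m ≠ l) :
    ((if crosses (.cup i k) e = true then 1 else 0)
      + (if crosses (.arc j l) e = true then (1:ℕ) else 0)) % 2
  = ((if crosses (.arc i l) e = true then 1 else 0)
      + (if crosses (.cup j k) e = true then (1:ℕ) else 0)) % 2 := by
  cases e with
  | cup a b =>
    obtain ⟨hab, ha1, ha2, ha3, hb1, hb2, hb3⟩ := he1 a b rfl
    simp only [crosses, decide_eq_true_eq]
    simp only [Fin.lt_def, ne_eq, Fin.ext_iff] at *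
    split_ifs <;> omega
  | cap a b =>
    simp only [crosses, decide_eq_true_eq]
    simp only [Bool.false_eq_true, if_false]
    omega
  | arc a m =>
    obtain ⟨ha1, ha2, ha3, hm⟩ := he2 a m rfl
    simp only [crosses, decide_eq_true_eq]
    simp only [Fin.lt_def, ne_eq, Fin.ext_iff] at *
    split_ifs <;> omega

lemma edgeOf_shape {i j k l : Fin n} (x y : BVertex n) (hxy : x ≠ y)
    (hxi : x ≠ .inl i) (hxj : x ≠ .inl j) (hxk : x ≠ .inl k) (hxl : x ≠ .inr l)
    (hyi : y ≠ .inl i) (hyj : y ≠ .inl j) (hyk : y ≠ .inl k) (hyl : y ≠ .inr l) :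
    (∀ a b, edgeOf x y = .cup a b →
        a < b ∧ a ≠ i ∧ a ≠ j ∧ a ≠ k ∧ b ≠ i ∧ b ≠ j ∧ b ≠ k) ∧
    (∀ a m, edgeOf x y = .arc a m → a ≠ i ∧ a ≠ j ∧ a ≠ k ∧ m ≠ l) := by
  cases x with
  | inl p =>
    cases y with
    | inl q =>
      have hpq : p ≠ q := fun h => hxy (by rw [h])
      have hpi : p ≠ i := fun h => hxi (by rw [h])
      have hpj : p ≠ j := fun h => hxj (by rw [h])
      have hpk : p ≠ k := fun h => hxk (by rw [h])
      have hqi : q ≠ i := fun h => hyi (by rw [h])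
      have hqj : q ≠ j := fun h => hyj (by rw [h])
      have hqk : q ≠ k := fun h => hyk (by rw [h])
      have hmin : ∀ r : Fin n, p ≠ r → q ≠ r → min p q ≠ r := by
        intro r h1 h2
        rcases min_choice p q with h | h <;> rw [h] <;> assumption
      have hmax : ∀ r : Fin n, p ≠ r → q ≠ r → max p q ≠ r := by
        intro r h1 h2
        rcases max_choice p q with h | h <;> rw [h] <;> assumption
      constructor
      · intro a b hab
        simp only [edgeOf] at hab
        injection hab with h1 h2
        subst h1; subst h2
        exact ⟨min_lt_max.mpr hpq, hmin i hpi hqi, hmin j hpj hqj, hmin k hpk hqk,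
          hmax i hpi hqi, hmax j hpj hqj, hmax k hpk hqk⟩
      · intro a m h
        simp only [edgeOf] at h
        exact nomatch h
    | inr m' =>
      refine ⟨fun a b h => ?_, fun a m h => ?_⟩
      · simp only [edgeOf] at h; exact nomatch h
      · simp only [edgeOf] at h
        injection h with h1 h2
        subst h1; subst h2
        exact ⟨fun h => hxi (by rw [h]), fun h => hxj (by rw [h]),
          fun h => hxk (by rw [h]), fun h => hyl (by rw [h])⟩
  | inr q =>
    cases y with
    | inl p =>
      refine ⟨fun a b h => ?_, fun a m h => ?_⟩
      · simp only [edgeOf] at h; exact nomatch h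
      · simp only [edgeOf] at h
        injection h with h1 h2
        subst h1; subst h2
        exact ⟨fun h => hyi (by rw [h]), fun h => hyj (by rw [h]),
          fun h => hyk (by rw [h]), fun h => hxl (by rw [h])⟩
    | inr m' =>
      refine ⟨fun a b h => ?_, fun a m h => ?_⟩ <;>
        · simp only [edgeOf] at h; exact nomatch h

end CupArcSwapAux


/-- Lemma (c): replacing the cup `{T_i,T_k}` and the arc `{T_j,B_l}` by the arc
`{T_i,B_l}` and the cup `{T_j,T_k}` (where `i < j < k` are top positions and `l` is
a bottom position), all other edges remaining the same, changes the parity of the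
crossing number. -/
theorem cup_arc_swap_parity (n : ℕ) (hn : 1 ≤ n) (i j k l : Fin n)
    (hij : i < j) (hjk : j < k) (μ μ' : BrauerDiagram n)
    (hcup : μ.1 (Sum.inl i) = Sum.inl k)
    (harc : μ.1 (Sum.inl j) = Sum.inr l)
    (harc' : μ'.1 (Sum.inl i) = Sum.inr l)
    (hcup' : μ'.1 (Sum.inl j) = Sum.inl k)
    (hagree : ∀ x : BVertex n, x ≠ Sum.inl i → x ≠ Sum.inl j →
      x ≠ Sum.inl k → x ≠ Sum.inr l → μ.1 x = μ'.1 x) :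
    (-1 : ℤ) ^ crossingNumber μ = -(-1 : ℤ) ^ crossingNumber μ' := by
  classical
  open CupArcSwapAux in
  have hik : i < k := hij.trans hjk
  have hki : μ.1 (Sum.inl k) = Sum.inl i := by
    have h := μ.2.1 (Sum.inl i); rw [hcup] at h; exact h
  have hlj : μ.1 (Sum.inr l) = Sum.inl j := by
    have h := μ.2.1 (Sum.inl j); rw [harc] at h; exact h
  have hkj' : μ'.1 (Sum.inl k) = Sum.inl j := by
    have h := μ'.2.1 (Sum.inl j); rw [hcup'] at h; exact h
  have hli' : μ'.1 (Sum.inr l) = Sum.inl i := by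
    have h := μ'.2.1 (Sum.inl i); rw [harc'] at h; exact h
  set E : Finset (BEdge n) :=
    (Finset.univ.filter (fun x : BVertex n => x ≠ Sum.inl i ∧ x ≠ Sum.inl j ∧
      x ≠ Sum.inl k ∧ x ≠ Sum.inr l)).image (fun x => edgeOf x (μ.1 x)) with hE
  -- shape of elements of E
  have hshape : ∀ e ∈ E,
      (∀ a b, e = BEdge.cup a b →
        a < b ∧ a ≠ i ∧ a ≠ j ∧ a ≠ k ∧ b ≠ i ∧ b ≠ j ∧ b ≠ k) ∧
      (∀ a m, e = BEdge.arc a m → a ≠ i ∧ a ≠ j ∧ a ≠ k ∧ m ≠ l) := by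
    intro e he
    rw [hE, Finset.mem_image] at he
    obtain ⟨x, hx, rfl⟩ := he
    rw [Finset.mem_filter] at hx
    obtain ⟨-, hx1, hx2, hx3, hx4⟩ := hx
    have hy1 : μ.1 x ≠ Sum.inl i := by
      intro h; apply hx3
      have h2 := μ.2.1 x; rw [h, hcup] at h2; exact h2.symm
    have hy2 : μ.1 x ≠ Sum.inl j := by
      intro h; apply hx4
      have h2 := μ.2.1 x; rw [h, harc] at h2; exact h2.symm
    have hy3 : μ.1 x ≠ Sum.inl k := by
      intro h; apply hx1
      have h2 := μ.2.1 x; rw [h, hki] at h2; exact h2.symm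
    have hy4 : μ.1 x ≠ Sum.inr l := by
      intro h; apply hx2
      have h2 := μ.2.1 x; rw [h, hlj] at h2; exact h2.symm
    exact CupArcSwapAux.edgeOf_shape x (μ.1 x) (fun h => μ.2.2 x h.symm)
      hx1 hx2 hx3 hx4 hy1 hy2 hy3 hy4
  have huniv : (Finset.univ : Finset (BVertex n)) =
      insert (Sum.inl i) (insert (Sum.inl j) (insert (Sum.inl k) (insert (Sum.inr l)
        (Finset.univ.filter (fun x : BVertex n => x ≠ Sum.inl i ∧ x ≠ Sum.inl j ∧
          x ≠ Sum.inl k ∧ x ≠ Sum.inr l))))) := by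
    ext x
    simp only [Finset.mem_insert, Finset.mem_filter, Finset.mem_univ, true_and,
      true_iff]
    tauto
  have hedges : edges μ = insert (BEdge.cup i k) (insert (BEdge.arc j l) E) := by
    show Finset.univ.image (fun x => edgeOf x (μ.1 x)) = _
    rw [huniv]
    simp only [Finset.image_insert]
    rw [hcup, harc, hki, hlj, ← hE]
    have e1 : edgeOf (Sum.inl i) (Sum.inl k) = BEdge.cup i k := by
      simp [edgeOf, min_eq_left hik.le, max_eq_right hik.le]
    have e2 : edgeOf (Sum.inl k) (Sum.inl i) = BEdge.cup i k := by
      simp [edgeOf, min_eq_right hik.le, max_eq_left hik.le]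
    rw [e1, e2]
    show insert _ (insert (BEdge.arc j l) (insert _ (insert (BEdge.arc j l) E))) = _
    ext e
    simp only [Finset.mem_insert]
    tauto
  have hedges' : edges μ' = insert (BEdge.arc i l) (insert (BEdge.cup j k) E) := by
    have hEE : (Finset.univ.filter (fun x : BVertex n => x ≠ Sum.inl i ∧ x ≠ Sum.inl j ∧
        x ≠ Sum.inl k ∧ x ≠ Sum.inr l)).image (fun x => edgeOf x (μ'.1 x)) = E := by
      rw [hE]
      apply Finset.image_congr
      intro x hx
      simp only [Finset.coe_filter, Finset.mem_univ, true_and, Set.mem_setOf_eq] at hx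
      exact congrArg (edgeOf x) (hagree x hx.1 hx.2.1 hx.2.2.1 hx.2.2.2).symm
    show Finset.univ.image (fun x => edgeOf x (μ'.1 x)) = _
    rw [huniv]
    simp only [Finset.image_insert]
    rw [harc', hcup', hkj', hli', hEE]
    have e1 : edgeOf (Sum.inl j) (Sum.inl k) = BEdge.cup j k := by
      simp [edgeOf, min_eq_left hjk.le, max_eq_right hjk.le]
    have e2 : edgeOf (Sum.inl k) (Sum.inl j) = BEdge.cup j k := by
      simp [edgeOf, min_eq_right hjk.le, max_eq_left hjk.le]
    rw [e1, e2]
    show insert (BEdge.arc i l) (insert _ (insert _ (insert (BEdge.arc i l) E))) = _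
    ext e
    simp only [Finset.mem_insert]
    tauto
  -- nonmembership
  have hc1E : BEdge.cup i k ∉ E := fun h => ((hshape _ h).1 i k rfl).2.1 rfl
  have ha1E : BEdge.arc j l ∉ E := fun h => ((hshape _ h).2 j l rfl).2.1 rfl
  have hc2E : BEdge.cup j k ∉ E := fun h => ((hshape _ h).1 j k rfl).2.2.1 rfl
  have ha2E : BEdge.arc i l ∉ E := fun h => ((hshape _ h).2 i l rfl).1 rfl
  have hc1 : BEdge.cup i k ∉ insert (BEdge.arc j l) E := by
    intro h
    rcases Finset.mem_insert.mp h with h | h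
    · exact nomatch h
    · exact hc1E h
  have ha2 : BEdge.arc i l ∉ insert (BEdge.cup j k) E := by
    intro h
    rcases Finset.mem_insert.mp h with h | h
    · exact nomatch h
    · exact ha2E h
  -- crossings of the special edges with each other
  have hcr1 : crosses (BEdge.cup i k) (BEdge.arc j l) = true := by
    simp only [crosses, decide_eq_true_eq]; exact ⟨hij, hjk⟩
  have hcr2 : crosses (BEdge.arc i l) (BEdge.cup j k) = false := by
    simp only [crosses, decide_eq_false_iff_not]
    rintro ⟨h, -⟩; exact absurd (h.trans hij) (lt_irrefl j)
  -- named sums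
  set A := ∑ b ∈ E, (if crosses (BEdge.cup i k) b = true then (1:ℕ) else 0) with hAdef
  set B := ∑ b ∈ E, (if crosses (BEdge.arc j l) b = true then (1:ℕ) else 0) with hBdef
  set C := ∑ b ∈ E, (if crosses (BEdge.arc i l) b = true then (1:ℕ) else 0) with hCdef
  set D := ∑ b ∈ E, (if crosses (BEdge.cup j k) b = true then (1:ℕ) else 0) with hDdef
  obtain ⟨t, ht⟩ := CupArcSwapAux.even_N E
  have hA : crossingNumber μ = t + (A + B) + 1 := by
    simp only [crossingNumber]
    rw [CupArcSwapAux.crossing_eq, hedges, CupArcSwapAux.N_insert hc1,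
      Finset.sum_insert ha1E, CupArcSwapAux.N_insert ha1E, hcr1, ht,
      hAdef, hBdef]
    simp only [if_true]
    omega
  have hB : crossingNumber μ' = t + (C + D) := by
    simp only [crossingNumber]
    rw [CupArcSwapAux.crossing_eq, hedges', CupArcSwapAux.N_insert ha2,
      Finset.sum_insert hc2E, CupArcSwapAux.N_insert hc2E, hcr2, ht,
      hCdef, hDdef]
    simp only [Bool.false_eq_true, if_false]
    omega
  have hmod : (A + B) % 2 = (C + D) % 2 := by
    rw [hAdef, hBdef, hCdef, hDdef, ← Finset.sum_add_distrib, ← Finset.sum_add_distrib,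
      Finset.sum_nat_mod,
      Finset.sum_congr rfl (fun e he =>
        CupArcSwapAux.key_parity hij hjk e (hshape e he).1 (hshape e he).2),
      ← Finset.sum_nat_mod]
  have key : ∀ u v : ℕ, u % 2 ≠ v % 2 → (-1:ℤ)^u = -(-1:ℤ)^v := by
    intro u v h
    rcases Nat.even_or_odd u with hu | hu <;> rcases Nat.even_or_odd v with hv | hv
    · exfalso; rw [Nat.even_iff] at hu hv; omega
    · rw [hu.neg_one_pow, hv.neg_one_pow]; ring
    · rw [hu.neg_one_pow, hv.neg_one_pow]
    · exfalso; rw [Nat.odd_iff] at hu hv; omega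
  rw [hA, hB]
  exact key _ _ (by omega)
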